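/- For nonnegative reals λ1 ≥ λ2 ≥ λ3 with λ1 > λ2, the directional derivative of the entropy -∑ λi log λi along the constraint-preserving direction (keeping ∑ λi and ∑ λi² fixed) satisfies dS/dλ3 ≥ 0; equivalently, (λ3-λ2) log λ1 + (λ1-λ3) log λ2 + (λ2-λ1) log λ3 ≥ 0 whenever λ1 ≥ λ2 ≥ λ3 > 0. -/
import Mathlib


/-- For λ1 ≥ λ2 ≥ λ3 > 0, one has
(λ3-λ2) log λ1 + (λ1-λ3) log λ2 + (λ2-λ1) log λ3 ≥ 0 (logarithm base 2);
this is the sign of the directional derivative dS/dλ3 of the entropy along the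
constraint-preserving direction. -/
theorem stmt4 (l1 l2 l3 : ℝ) (h3 : 0 < l3) (h32 : l3 ≤ l2) (h21 : l2 ≤ l1) :
    0 ≤ (l3 - l2) * Real.logb 2 l1 + (l1 - l3) * Real.logb 2 l2
        + (l2 - l1) * Real.logb 2 l3 := by
  have h2 : 0 < l2 := lt_of_lt_of_le h3 h32
  have h1 : 0 < l1 := lt_of_lt_of_le h2 h21
  have key : 0 ≤ (l3 - l2) * Real.log l1 + (l1 - l3) * Real.log l2
      + (l2 - l1) * Real.log l3 := by
    have hA : (l2 - l3) / l2 ≤ Real.log l2 - Real.log l3 := by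
      have := Real.log_le_sub_one_of_pos (div_pos h3 h2)
      rw [Real.log_div (ne_of_gt h3) (ne_of_gt h2)] at this
      rw [div_le_iff₀ h2]
      nlinarith [mul_le_mul_of_nonneg_right this h2.le, mul_div_cancel₀ l3 (ne_of_gt h2)]
    have hB : Real.log l1 - Real.log l2 ≤ (l1 - l2) / l2 := by
      have := Real.log_le_sub_one_of_pos (div_pos h1 h2)
      rw [Real.log_div (ne_of_gt h1) (ne_of_gt h2)] at this
      rw [le_div_iff₀ h2]
      nlinarith [mul_le_mul_of_nonneg_right this h2.le, mul_div_cancel₀ l1 (ne_of_gt h2)]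
    have hAB : (l2 - l3) * (Real.log l1 - Real.log l2)
        ≤ (l1 - l2) * (Real.log l2 - Real.log l3) := by
      calc (l2 - l3) * (Real.log l1 - Real.log l2)
          ≤ (l2 - l3) * ((l1 - l2) / l2) :=
            mul_le_mul_of_nonneg_left hB (by linarith)
        _ = (l1 - l2) * ((l2 - l3) / l2) := by ring
        _ ≤ (l1 - l2) * (Real.log l2 - Real.log l3) :=
            mul_le_mul_of_nonneg_left hA (by linarith)
    nlinarith [hAB]
  have hlog2 : 0 < Real.log 2 := Real.log_pos (by norm_num)
  have : (l3 - l2) * Real.logb 2 l1 + (l1 - l3) * Real.logb 2 l2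
      + (l2 - l1) * Real.logb 2 l3
      = ((l3 - l2) * Real.log l1 + (l1 - l3) * Real.log l2
        + (l2 - l1) * Real.log l3) / Real.log 2 := by
    simp [Real.logb]; ring
  rw [this]
  exact div_nonneg key hlog2.le
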